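/- The map Ψ : (0,∞) × ℝ³ → ℝ⁴ sending (ρ, φ, y', z') to (w, x, y, z) = (1/D)·(1 − ρ² − φ²/4 − 2y'² − 2z'², φ, 2√2 y', 2√2 z') with D = (1 + ρ)² + φ²/4 + 2y'² + 2z'², is a bijection onto the open unit ball in ℝ⁴, with inverse (ρ, φ, y', z') = (1/E)·(1 − w² − x² − y² − z², 4x, √2 y, √2 z) where E = (1 + w)² + x² + y² + z². -/

import Mathlib

/-- Coordinate change from `ℝ_{>0} × ℝ³` to the real unit 4-ball. -/
noncomputable def Psi (p : ℝ × ℝ × ℝ × ℝ) : ℝ × ℝ × ℝ × ℝ :=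
  let ρ := p.1; let φ := p.2.1; let y' := p.2.2.1; let z' := p.2.2.2
  let D := (1 + ρ)^2 + φ^2/4 + 2*y'^2 + 2*z'^2
  ((1 - ρ^2 - φ^2/4 - 2*y'^2 - 2*z'^2) / D, φ / D,
    2 * Real.sqrt 2 * y' / D, 2 * Real.sqrt 2 * z' / D)

/-- The inverse coordinate change. -/
noncomputable def PsiInv (q : ℝ × ℝ × ℝ × ℝ) : ℝ × ℝ × ℝ × ℝ :=
  let w := q.1; let x := q.2.1; let y := q.2.2.1; let z := q.2.2.2
  let E := (1 + w)^2 + x^2 + y^2 + z^2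
  ((1 - w^2 - x^2 - y^2 - z^2) / E, 4 * x / E,
    Real.sqrt 2 * y / E, Real.sqrt 2 * z / E)

lemma sqrt2_sq : Real.sqrt 2 ^ 2 = 2 := Real.sq_sqrt (by norm_num)

lemma sq8 (a : ℝ) : (2 * Real.sqrt 2 * a)^2 = 8 * a^2 := by
  rw [mul_pow, mul_pow, sqrt2_sq]; ring

lemma sq2 (a : ℝ) : (Real.sqrt 2 * a)^2 = 2 * a^2 := by
  rw [mul_pow, sqrt2_sq]

lemma Epos {w x y z : ℝ} (hq : w^2 + x^2 + y^2 + z^2 < 1) :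
    0 < (1 + w)^2 + x^2 + y^2 + z^2 := by
  have hw : -1 < w := by nlinarith [sq_nonneg (1+w), sq_nonneg x, sq_nonneg y, sq_nonneg z]
  have h1 : 0 < 1 + w := by linarith
  nlinarith [mul_pos h1 h1, sq_nonneg x, sq_nonneg y, sq_nonneg z]

lemma mapsto1 : ∀ p ∈ {p : ℝ × ℝ × ℝ × ℝ | 0 < p.1},
    Psi p ∈ {q : ℝ × ℝ × ℝ × ℝ | q.1^2 + q.2.1^2 + q.2.2.1^2 + q.2.2.2^2 < 1} := by
  rintro ⟨ρ, φ, y, z⟩ hp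
  simp only [Set.mem_setOf_eq] at hp ⊢
  simp only [Psi]
  have hD : 0 < (1 + ρ)^2 + φ^2/4 + 2*y^2 + 2*z^2 := by nlinarith [sq_nonneg φ, sq_nonneg y, sq_nonneg z]
  rw [div_pow, div_pow, div_pow, div_pow, sq8, sq8, ← add_div, ← add_div,
    ← add_div, div_lt_one (by positivity)]
  nlinarith [mul_pos hp hD]

lemma mapsto2 : ∀ q ∈ {q : ℝ × ℝ × ℝ × ℝ | q.1^2 + q.2.1^2 + q.2.2.1^2 + q.2.2.2^2 < 1},
    PsiInv q ∈ {p : ℝ × ℝ × ℝ × ℝ | 0 < p.1} := by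
  rintro ⟨w, x, y, z⟩ hq
  simp only [Set.mem_setOf_eq] at hq ⊢
  simp only [PsiInv]
  exact div_pos (by linarith) (Epos hq)

lemma leftinv : ∀ p ∈ {p : ℝ × ℝ × ℝ × ℝ | 0 < p.1}, PsiInv (Psi p) = p := by
  rintro ⟨ρ, φ, y, z⟩ hp
  simp only [Set.mem_setOf_eq] at hp
  have hD : 0 < (1 + ρ)^2 + φ^2/4 + 2*y^2 + 2*z^2 := by nlinarith [sq_nonneg φ, sq_nonneg y, sq_nonneg z]
  have hD' := hD.ne'
  simp only [Psi, PsiInv, Prod.mk.injEq]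
  set D := (1 + ρ)^2 + φ^2/4 + 2*y^2 + 2*z^2 with hDdef
  have hE : (1 + (1 - ρ^2 - φ^2/4 - 2*y^2 - 2*z^2) / D)^2 + (φ/D)^2
      + (2 * Real.sqrt 2 * y / D)^2 + (2 * Real.sqrt 2 * z / D)^2 = 4 / D := by
    rw [div_pow, div_pow, div_pow, sq8, sq8]
    rw [hDdef]; field_simp; try ring
  refine ⟨?_, ?_, ?_, ?_⟩
  · rw [hE, div_pow, div_pow, div_pow, div_pow, sq8, sq8]
    rw [hDdef]; field_simp; try ring
  · rw [hE]; field_simp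
  · rw [hE, ← mul_div_assoc, ← mul_assoc, show Real.sqrt 2 * (2 * Real.sqrt 2) = 4 by linear_combination 2 * sqrt2_sq]
    field_simp; try ring
  · rw [hE, ← mul_div_assoc, ← mul_assoc, show Real.sqrt 2 * (2 * Real.sqrt 2) = 4 by linear_combination 2 * sqrt2_sq]
    field_simp; try ring

lemma rightinv : ∀ q ∈ {q : ℝ × ℝ × ℝ × ℝ | q.1^2 + q.2.1^2 + q.2.2.1^2 + q.2.2.2^2 < 1},
    Psi (PsiInv q) = q := by
  rintro ⟨w, x, y, z⟩ hq
  simp only [Set.mem_setOf_eq] at hq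
  have hE : 0 < (1 + w)^2 + x^2 + y^2 + z^2 := Epos hq
  have hE' := hE.ne'
  simp only [Psi, PsiInv, Prod.mk.injEq]
  set E := (1 + w)^2 + x^2 + y^2 + z^2 with hEdef
  have hDD : (1 + (1 - w^2 - x^2 - y^2 - z^2) / E)^2 + (4*x/E)^2/4
      + 2*(Real.sqrt 2 * y / E)^2 + 2*(Real.sqrt 2 * z / E)^2 = 4 / E := by
    rw [div_pow, div_pow, div_pow, sq2, sq2]
    rw [hEdef] at hE' ⊢; field_simp; try ring
  refine ⟨?_, ?_, ?_, ?_⟩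
  · rw [hDD, div_pow, div_pow, div_pow, div_pow, sq2, sq2]
    rw [hEdef] at hE' ⊢; field_simp; try ring
  · rw [hDD]; field_simp; try ring
  · rw [hDD, ← mul_div_assoc, show 2 * Real.sqrt 2 * (Real.sqrt 2 * y) = 4 * y by linear_combination 2 * y * sqrt2_sq]
    field_simp; try ring
  · rw [hDD, ← mul_div_assoc, show 2 * Real.sqrt 2 * (Real.sqrt 2 * z) = 4 * z by linear_combination 2 * z * sqrt2_sq]
    field_simp; try ring

theorem Psi_bijection :
    Set.BijOn Psi {p : ℝ × ℝ × ℝ × ℝ | 0 < p.1}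
      {q : ℝ × ℝ × ℝ × ℝ | q.1^2 + q.2.1^2 + q.2.2.1^2 + q.2.2.2^2 < 1} ∧
    (∀ p ∈ {p : ℝ × ℝ × ℝ × ℝ | 0 < p.1}, PsiInv (Psi p) = p) ∧
    (∀ q ∈ {q : ℝ × ℝ × ℝ × ℝ | q.1^2 + q.2.1^2 + q.2.2.1^2 + q.2.2.2^2 < 1},
      Psi (PsiInv q) = q) := by
  refine ⟨Set.InvOn.bijOn ⟨leftinv, rightinv⟩ mapsto1 mapsto2, leftinv, rightinv⟩
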